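/- Let ξ be a Gödel numbering of a language containing a binary smash function symbol # (interpreted as (m, n) ↦ 2^{|m|·|n|} where |m| is the binary length of m), and suppose there is a polynomial P such that ξ(A) < 2^{P(|A|)} for all expressions A, where |A| is string length. Then ξ is not regular for this language: there exists a closed term t with ev(t) > ξ(t). -/
import Mathlib


/-- Closed terms of a language containing 0, S and the binary smash function #. -/
inductive SmashTm where
  | zero : SmashTm
  | succ : SmashTm → SmashTm
  | smash : SmashTm → SmashTm → SmashTm
deriving DecidableEq

/-- Evaluation in the standard model, where `#` is interpreted as
`(m, n) ↦ 2^(|m|·|n|)` with `|m|` the binary length of `m`. -/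
def SmashTm.eval : SmashTm → ℕ
  | .zero => 0
  | .succ t => t.eval + 1
  | .smash s t => 2 ^ (Nat.size s.eval * Nat.size t.eval)

/-- String length of a term: `(s # t)` has two brackets and the symbol `#`. -/
def SmashTm.len : SmashTm → ℕ
  | .zero => 1
  | .succ t => t.len + 1
  | .smash s t => s.len + t.len + 3

/-- The term `SS0`. -/
def SmashTm.two : SmashTm := .succ (.succ .zero)

/-- The terms `ŵ(n)`. -/
def SmashTm.w : ℕ → SmashTm
  | 0 => .smash .two .two
  | n + 1 => .smash .two (SmashTm.w n)

lemma SmashTm.len_w (n : ℕ) : (SmashTm.w n).len = 6 * n + 9 := by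
  induction n with
  | zero => rfl
  | succ n ih =>
      show SmashTm.two.len + (SmashTm.w n).len + 3 = 6 * (n + 1) + 9
      have h2 : SmashTm.two.len = 3 := rfl
      omega

lemma SmashTm.eval_two : SmashTm.two.eval = 2 := rfl

lemma SmashTm.eval_w (n : ℕ) : 2 ^ 2 ^ (n + 2) ≤ (SmashTm.w n).eval := by
  induction n with
  | zero =>
      have h2 : Nat.size 2 = 2 := by
        rw [show (2:ℕ) = 2 ^ 1 by rw [pow_one], Nat.size_pow, pow_one]
      show 2 ^ 2 ^ 2 ≤ 2 ^ (Nat.size (2:ℕ) * Nat.size (2:ℕ))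
      rw [h2]; norm_num
  | succ n ih =>
      have hsize : 2 ^ (n + 2) + 1 ≤ Nat.size (SmashTm.w n).eval := by
        calc 2 ^ (n + 2) + 1 = Nat.size (2 ^ 2 ^ (n + 2)) := (Nat.size_pow).symm
          _ ≤ Nat.size (SmashTm.w n).eval := Nat.size_le_size ih
      show 2 ^ 2 ^ (n + 1 + 2) ≤ 2 ^ (Nat.size SmashTm.two.eval * Nat.size (SmashTm.w n).eval)
      apply Nat.pow_le_pow_right (by norm_num)
      have : Nat.size SmashTm.two.eval = 2 := by
        rw [SmashTm.eval_two, show (2:ℕ) = 2 ^ 1 by rw [pow_one], Nat.size_pow, pow_one]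
      rw [this]
      calc 2 ^ (n + 1 + 2) = 2 * 2 ^ (n + 2) := by ring
        _ ≤ 2 * (2 ^ (n + 2) + 1) := by omega
        _ ≤ 2 * Nat.size (SmashTm.w n).eval := by omega

lemma sq_le_two_pow : ∀ k, 4 ≤ k → k * k ≤ 2 ^ k := by
  intro k hk
  induction k with
  | zero => omega
  | succ k ih =>
      rcases Nat.lt_or_ge k 4 with h | h
      · have hk3 : k = 3 := by omega
        subst hk3; norm_num
      · have h1 := ih (by omega)
        have h2 : 2 * k + 1 ≤ k * k := by nlinarith
        calc (k + 1) * (k + 1) = k * k + (2 * k + 1) := by ring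
          _ ≤ 2 ^ k + 2 ^ k := by omega
          _ = 2 ^ (k + 1) := by ring

lemma exists_lin_lt_two_pow (a b : ℕ) : ∃ k, a + b * k < 2 ^ k := by
  refine ⟨a + b + 4, ?_⟩
  set k := a + b + 4 with hk
  have h4 : 4 ≤ k := by omega
  have : a + b * k ≤ (k - 1) + (k - 1) * k := by
    have ha : a ≤ k - 1 := by omega
    have hb : b ≤ k - 1 := by omega
    exact Nat.add_le_add ha (Nat.mul_le_mul_right k hb)
  have hlt : (k - 1) + (k - 1) * k < k * k := by
    have : k - 1 < k := by omega
    nlinarith [Nat.sub_add_cancel (show 1 ≤ k by omega)]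
  exact lt_of_le_of_lt this (lt_of_lt_of_le hlt (sq_le_two_pow k h4))

lemma poly_bound (P : Polynomial ℕ) : ∃ C d, ∀ m, P.eval m ≤ C * (m + 1) ^ d := by
  induction P using Polynomial.induction_on' with
  | monomial n a =>
      exact ⟨a, n, fun m => by
        simp only [Polynomial.eval_monomial]
        exact Nat.mul_le_mul_left a (Nat.pow_le_pow_left (by omega) n)⟩
  | add p q hp hq =>
      obtain ⟨C1, d1, h1⟩ := hp
      obtain ⟨C2, d2, h2⟩ := hq
      refine ⟨C1 + C2, max d1 d2, fun m => ?_⟩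
      have e1 : (m + 1) ^ d1 ≤ (m + 1) ^ max d1 d2 :=
        Nat.pow_le_pow_right (by omega) (le_max_left _ _)
      have e2 : (m + 1) ^ d2 ≤ (m + 1) ^ max d1 d2 :=
        Nat.pow_le_pow_right (by omega) (le_max_right _ _)
      calc (p + q).eval m = p.eval m + q.eval m := by simp
        _ ≤ C1 * (m + 1) ^ max d1 d2 + C2 * (m + 1) ^ max d1 d2 := by
            exact Nat.add_le_add (le_trans (h1 m) (Nat.mul_le_mul_left _ e1))
              (le_trans (h2 m) (Nat.mul_le_mul_left _ e2))
        _ = (C1 + C2) * (m + 1) ^ max d1 d2 := by ring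

/-- If a Gödel numbering `ξ` of a language with the smash function satisfies
`ξ A < 2^(P(|A|))` for some polynomial `P`, then `ξ` is not regular: there is a
closed term whose value exceeds its code. -/
theorem smash_not_regular (ξ : SmashTm → ℕ) (hξ : Function.Injective ξ)
    (P : Polynomial ℕ) (hP : ∀ A : SmashTm, ξ A < 2 ^ P.eval A.len) :
    ∃ t : SmashTm, ξ t < t.eval := by
  obtain ⟨C, d, hCd⟩ := poly_bound P
  set C' := C * 16 ^ d with hC'
  obtain ⟨k, hk⟩ := exists_lin_lt_two_pow (Nat.size C') d
  have hkpos : 1 ≤ 2 ^ k := Nat.one_le_two_pow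
  set m := 2 ^ k - 1 with hm
  have hm1 : m + 1 = 2 ^ k := by omega
  refine ⟨SmashTm.w m, ?_⟩
  have hlen : (SmashTm.w m).len = 6 * m + 9 := SmashTm.len_w m
  have hexp : P.eval (6 * m + 9) ≤ 2 ^ (m + 2) := by
    calc P.eval (6 * m + 9) ≤ C * (6 * m + 9 + 1) ^ d := hCd _
      _ ≤ C * (16 * (m + 1)) ^ d := by
          exact Nat.mul_le_mul_left C (Nat.pow_le_pow_left (by omega) d)
      _ = C' * (m + 1) ^ d := by rw [hC', mul_pow]; ring
      _ = C' * 2 ^ (k * d) := by rw [hm1, ← pow_mul]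
      _ ≤ 2 ^ Nat.size C' * 2 ^ (k * d) :=
          Nat.mul_le_mul_right _ (le_of_lt (Nat.lt_size_self C'))
      _ = 2 ^ (Nat.size C' + k * d) := by rw [← pow_add]
      _ ≤ 2 ^ (m + 2) := by
          apply Nat.pow_le_pow_right (by norm_num)
          have : k * d = d * k := by ring
          omega
  calc ξ (SmashTm.w m) < 2 ^ P.eval (SmashTm.w m).len := hP _
    _ = 2 ^ P.eval (6 * m + 9) := by rw [hlen]
    _ ≤ 2 ^ 2 ^ (m + 2) := Nat.pow_le_pow_right (by norm_num) hexp
    _ ≤ (SmashTm.w m).eval := SmashTm.eval_w m
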